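/- Let y₁, y₂ > 0 be real numbers with y₁² + y₂² < 1. If there exists a complex number t with E(t) = 0 and D(t) = 0 (viewing E and D as polynomials with real coefficients evaluated over ℂ), then 27·y₁⁴·y₂⁴ − 18·y₁²·y₂² + 4·y₁² + 4·y₂² = 1. -/
import Mathlib

/-- The polynomial `E(t)` evaluated over ℂ. -/
def EFunC (y₁ y₂ : ℝ) (t : ℂ) : ℂ :=
  (y₁ : ℂ)^2 * (t^2 + 4*t + 1)^3 + (y₂ : ℂ)^2 * (t^2 - 2*t - 2)^3
    + 2*t^6 + 6*t^5 - 15*t^4 - 40*t^3 - 15*t^2 + 6*t + 2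

/-- The polynomial `D(t)` evaluated over ℂ. -/
def DFunC (y₁ y₂ : ℝ) (t : ℂ) : ℂ :=
  (y₁ : ℂ)^2 * (1 - t^2) * (t^2 + 4*t + 1)^2
    + (y₂ : ℂ)^2 * (2*t + t^2) * (t^2 - 2*t - 2)^2
    + 6*t^5 + 15*t^4 - 15*t^2 - 6*t

set_option maxHeartbeats 2000000 in
/-- if `y₁² + y₂² < 1` and `E` and `D` have a common complex zero,
then `(y₁,y₂)` lies on the caustic curve `27y₁⁴y₂⁴ − 18y₁²y₂² + 4y₁² + 4y₂² = 1`. -/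
theorem stmt_11 (y₁ y₂ : ℝ) (hy₁ : 0 < y₁) (hy₂ : 0 < y₂)
    (h : y₁^2 + y₂^2 < 1)
    (hroot : ∃ t : ℂ, EFunC y₁ y₂ t = 0 ∧ DFunC y₁ y₂ t = 0) :
    27 * y₁^4 * y₂^4 - 18 * y₁^2 * y₂^2 + 4 * y₁^2 + 4 * y₂^2 = 1 := by
  obtain ⟨t, hE, hD⟩ := hroot
  have hE' : (y₁ : ℂ)^2 * (t^2 + 4*t + 1)^3 + (y₂ : ℂ)^2 * (t^2 - 2*t - 2)^3
      + 2*t^6 + 6*t^5 - 15*t^4 - 40*t^3 - 15*t^2 + 6*t + 2 = 0 := hE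
  have hD' : (y₁ : ℂ)^2 * (1 - t^2) * (t^2 + 4*t + 1)^2
      + (y₂ : ℂ)^2 * (2*t + t^2) * (t^2 - 2*t - 2)^2
      + 6*t^5 + 15*t^4 - 15*t^2 - 6*t = 0 := hD
  have h1 : (y₁ : ℂ)^2 * ((8:ℂ) + (96:ℂ) * t^1 + (456:ℂ) * t^2 + (1144:ℂ) * t^3 + (1746:ℂ) * t^4 + (1692:ℂ) * t^5 + (930:ℂ) * t^6 + (108:ℂ) * t^7 + (-216:ℂ) * t^8 + (-140:ℂ) * t^9 + (-6:ℂ) * t^10 + (12:ℂ) * t^11 + (2:ℂ) * t^12) = ((32:ℂ) * t^1 + (176:ℂ) * t^2 + (416:ℂ) * t^3 + (552:ℂ) * t^4 + (408:ℂ) * t^5 + (84:ℂ) * t^6 + (-120:ℂ) * t^7 + (-102:ℂ) * t^8 + (-12:ℂ) * t^9 + (22:ℂ) * t^10 + (4:ℂ) * t^11 + (-2:ℂ) * t^12) := by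
    linear_combination ((8:ℂ) * t^1 + (20:ℂ) * t^2 + (8:ℂ) * t^3 + (-8:ℂ) * t^4 + (-2:ℂ) * t^5 + (1:ℂ) * t^6) * hE' - ((-8:ℂ) + (-24:ℂ) * t^1 + (-12:ℂ) * t^2 + (16:ℂ) * t^3 + (6:ℂ) * t^4 + (-6:ℂ) * t^5 + (1:ℂ) * t^6) * hD'
  have h2 : (y₂ : ℂ)^2 * ((8:ℂ) + (96:ℂ) * t^1 + (456:ℂ) * t^2 + (1144:ℂ) * t^3 + (1746:ℂ) * t^4 + (1692:ℂ) * t^5 + (930:ℂ) * t^6 + (108:ℂ) * t^7 + (-216:ℂ) * t^8 + (-140:ℂ) * t^9 + (-6:ℂ) * t^10 + (12:ℂ) * t^11 + (2:ℂ) * t^12) = ((2:ℂ) + (28:ℂ) * t^1 + (154:ℂ) * t^2 + (428:ℂ) * t^3 + (654:ℂ) * t^4 + (528:ℂ) * t^5 + (-528:ℂ) * t^7 + (-654:ℂ) * t^8 + (-428:ℂ) * t^9 + (-154:ℂ) * t^10 + (-28:ℂ) * t^11 + (-2:ℂ) * t^12) := by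
    linear_combination ((1:ℂ) + (12:ℂ) * t^1 + (51:ℂ) * t^2 + (88:ℂ) * t^3 + (51:ℂ) * t^4 + (12:ℂ) * t^5 + (1:ℂ) * t^6) * hD' - ((1:ℂ) + (8:ℂ) * t^1 + (17:ℂ) * t^2 + (-17:ℂ) * t^4 + (-8:ℂ) * t^5 + (-1:ℂ) * t^6) * hE'
  have hmain : (27 * (y₁:ℂ)^4 * (y₂:ℂ)^4 - 18 * (y₁:ℂ)^2 * (y₂:ℂ)^2
      + 4 * (y₁:ℂ)^2 + 4 * (y₂:ℂ)^2 - 1) * ((8:ℂ) + (96:ℂ) * t^1 + (456:ℂ) * t^2 + (1144:ℂ) * t^3 + (1746:ℂ) * t^4 + (1692:ℂ) * t^5 + (930:ℂ) * t^6 + (108:ℂ) * t^7 + (-216:ℂ) * t^8 + (-140:ℂ) * t^9 + (-6:ℂ) * t^10 + (12:ℂ) * t^11 + (2:ℂ) * t^12)^4 = 0 := by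
    linear_combination
      (27 * ((y₁:ℂ)^2 * ((8:ℂ) + (96:ℂ) * t^1 + (456:ℂ) * t^2 + (1144:ℂ) * t^3 + (1746:ℂ) * t^4 + (1692:ℂ) * t^5 + (930:ℂ) * t^6 + (108:ℂ) * t^7 + (-216:ℂ) * t^8 + (-140:ℂ) * t^9 + (-6:ℂ) * t^10 + (12:ℂ) * t^11 + (2:ℂ) * t^12) + ((32:ℂ) * t^1 + (176:ℂ) * t^2 + (416:ℂ) * t^3 + (552:ℂ) * t^4 + (408:ℂ) * t^5 + (84:ℂ) * t^6 + (-120:ℂ) * t^7 + (-102:ℂ) * t^8 + (-12:ℂ) * t^9 + (22:ℂ) * t^10 + (4:ℂ) * t^11 + (-2:ℂ) * t^12)) * ((y₂:ℂ)^2 * ((8:ℂ) + (96:ℂ) * t^1 + (456:ℂ) * t^2 + (1144:ℂ) * t^3 + (1746:ℂ) * t^4 + (1692:ℂ) * t^5 + (930:ℂ) * t^6 + (108:ℂ) * t^7 + (-216:ℂ) * t^8 + (-140:ℂ) * t^9 + (-6:ℂ) * t^10 + (12:ℂ) * t^11 + (2:ℂ) * t^12))^2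
        - 18 * ((8:ℂ) + (96:ℂ) * t^1 + (456:ℂ) * t^2 + (1144:ℂ) * t^3 + (1746:ℂ) * t^4 + (1692:ℂ) * t^5 + (930:ℂ) * t^6 + (108:ℂ) * t^7 + (-216:ℂ) * t^8 + (-140:ℂ) * t^9 + (-6:ℂ) * t^10 + (12:ℂ) * t^11 + (2:ℂ) * t^12)^2 * ((y₂:ℂ)^2 * ((8:ℂ) + (96:ℂ) * t^1 + (456:ℂ) * t^2 + (1144:ℂ) * t^3 + (1746:ℂ) * t^4 + (1692:ℂ) * t^5 + (930:ℂ) * t^6 + (108:ℂ) * t^7 + (-216:ℂ) * t^8 + (-140:ℂ) * t^9 + (-6:ℂ) * t^10 + (12:ℂ) * t^11 + (2:ℂ) * t^12)) + 4 * ((8:ℂ) + (96:ℂ) * t^1 + (456:ℂ) * t^2 + (1144:ℂ) * t^3 + (1746:ℂ) * t^4 + (1692:ℂ) * t^5 + (930:ℂ) * t^6 + (108:ℂ) * t^7 + (-216:ℂ) * t^8 + (-140:ℂ) * t^9 + (-6:ℂ) * t^10 + (12:ℂ) * t^11 + (2:ℂ) * t^12)^3) * h1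
      + (27 * ((32:ℂ) * t^1 + (176:ℂ) * t^2 + (416:ℂ) * t^3 + (552:ℂ) * t^4 + (408:ℂ) * t^5 + (84:ℂ) * t^6 + (-120:ℂ) * t^7 + (-102:ℂ) * t^8 + (-12:ℂ) * t^9 + (22:ℂ) * t^10 + (4:ℂ) * t^11 + (-2:ℂ) * t^12)^2 * ((y₂:ℂ)^2 * ((8:ℂ) + (96:ℂ) * t^1 + (456:ℂ) * t^2 + (1144:ℂ) * t^3 + (1746:ℂ) * t^4 + (1692:ℂ) * t^5 + (930:ℂ) * t^6 + (108:ℂ) * t^7 + (-216:ℂ) * t^8 + (-140:ℂ) * t^9 + (-6:ℂ) * t^10 + (12:ℂ) * t^11 + (2:ℂ) * t^12) + ((2:ℂ) + (28:ℂ) * t^1 + (154:ℂ) * t^2 + (428:ℂ) * t^3 + (654:ℂ) * t^4 + (528:ℂ) * t^5 + (-528:ℂ) * t^7 + (-654:ℂ) * t^8 + (-428:ℂ) * t^9 + (-154:ℂ) * t^10 + (-28:ℂ) * t^11 + (-2:ℂ) * t^12))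
        - 18 * ((8:ℂ) + (96:ℂ) * t^1 + (456:ℂ) * t^2 + (1144:ℂ) * t^3 + (1746:ℂ) * t^4 + (1692:ℂ) * t^5 + (930:ℂ) * t^6 + (108:ℂ) * t^7 + (-216:ℂ) * t^8 + (-140:ℂ) * t^9 + (-6:ℂ) * t^10 + (12:ℂ) * t^11 + (2:ℂ) * t^12)^2 * ((32:ℂ) * t^1 + (176:ℂ) * t^2 + (416:ℂ) * t^3 + (552:ℂ) * t^4 + (408:ℂ) * t^5 + (84:ℂ) * t^6 + (-120:ℂ) * t^7 + (-102:ℂ) * t^8 + (-12:ℂ) * t^9 + (22:ℂ) * t^10 + (4:ℂ) * t^11 + (-2:ℂ) * t^12) + 4 * ((8:ℂ) + (96:ℂ) * t^1 + (456:ℂ) * t^2 + (1144:ℂ) * t^3 + (1746:ℂ) * t^4 + (1692:ℂ) * t^5 + (930:ℂ) * t^6 + (108:ℂ) * t^7 + (-216:ℂ) * t^8 + (-140:ℂ) * t^9 + (-6:ℂ) * t^10 + (12:ℂ) * t^11 + (2:ℂ) * t^12)^3) * h2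
  rcases mul_eq_zero.mp hmain with hc | hd
  · have hr : (27 * y₁^4 * y₂^4 - 18 * y₁^2 * y₂^2 + 4 * y₁^2 + 4 * y₂^2 - 1 : ℝ) = 0 := by
      exact_mod_cast hc
    linarith
  · have hΔ : ((8:ℂ) + (96:ℂ) * t^1 + (456:ℂ) * t^2 + (1144:ℂ) * t^3 + (1746:ℂ) * t^4 + (1692:ℂ) * t^5 + (930:ℂ) * t^6 + (108:ℂ) * t^7 + (-216:ℂ) * t^8 + (-140:ℂ) * t^9 + (-6:ℂ) * t^10 + (12:ℂ) * t^11 + (2:ℂ) * t^12) = 0 := by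
      have := pow_eq_zero_iff (n := 4) (by norm_num) |>.mp hd
      exact this
    have hda : ((32:ℂ) * t^1 + (176:ℂ) * t^2 + (416:ℂ) * t^3 + (552:ℂ) * t^4 + (408:ℂ) * t^5 + (84:ℂ) * t^6 + (-120:ℂ) * t^7 + (-102:ℂ) * t^8 + (-12:ℂ) * t^9 + (22:ℂ) * t^10 + (4:ℂ) * t^11 + (-2:ℂ) * t^12) = (0:ℂ) := by
      linear_combination -h1 + (y₁:ℂ)^2 * hΔ
    have hdb : ((2:ℂ) + (28:ℂ) * t^1 + (154:ℂ) * t^2 + (428:ℂ) * t^3 + (654:ℂ) * t^4 + (528:ℂ) * t^5 + (-528:ℂ) * t^7 + (-654:ℂ) * t^8 + (-428:ℂ) * t^9 + (-154:ℂ) * t^10 + (-28:ℂ) * t^11 + (-2:ℂ) * t^12) = (0:ℂ) := by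
      linear_combination -h2 + (y₂:ℂ)^2 * hΔ
    have hsq : (t^2 + t + 1)^2 = 0 := by
      linear_combination (((232:ℂ)/729) + ((113638:ℂ)/59049) * t^1 + ((451261:ℂ)/59049) * t^2 + ((385532:ℂ)/59049) * t^3 + ((-185017:ℂ)/39366) * t^4 + ((-518672:ℂ)/59049) * t^5 + ((-213721:ℂ)/59049) * t^6 + ((1058:ℂ)/6561) * t^7 + ((28288:ℂ)/59049) * t^8 + ((7064:ℂ)/59049) * t^9 + ((560:ℂ)/59049) * t^10) * hΔ + (((-40600:ℂ)/59049) + ((-29642:ℂ)/6561) * t^1 + ((-1110595:ℂ)/59049) * t^2 + ((-1389700:ℂ)/59049) * t^3 + ((-55211:ℂ)/118098) * t^4 + ((1203056:ℂ)/59049) * t^5 + ((1064327:ℂ)/59049) * t^6 + ((438962:ℂ)/59049) * t^7 + ((98240:ℂ)/59049) * t^8 + ((3848:ℂ)/19683) * t^9 + ((560:ℂ)/59049) * t^10) * hda + (((-1127:ℂ)/1458) + ((-110:ℂ)/729) * t^1 + ((307:ℂ)/729) * t^2 + ((-70:ℂ)/729) * t^3) * hdb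
    have ht : t^2 + t + 1 = 0 := pow_eq_zero_iff (n := 2) (by norm_num) |>.mp hsq
    have habc : (27:ℂ) * ((y₁:ℂ)^2 + (y₂:ℂ)^2 - 1) = 0 := by
      linear_combination hE' - ((y₁:ℂ)^2 * ((-26:ℂ) + (38:ℂ) * t^1 + (39:ℂ) * t^2 + (11:ℂ) * t^3 + (1:ℂ) * t^4) + (y₂:ℂ)^2 * ((-35:ℂ) + (11:ℂ) * t^1 + (12:ℂ) * t^2 + (-7:ℂ) * t^3 + (1:ℂ) * t^4) + ((29:ℂ) + (-23:ℂ) * t^1 + (-21:ℂ) * t^2 + (4:ℂ) * t^3 + (2:ℂ) * t^4)) * ht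
    have h5 : (y₁^2 + y₂^2 - 1 : ℝ) = 0 := by
      have : ((y₁^2 + y₂^2 - 1 : ℝ) : ℂ) = 0 := by
        push_cast
        linear_combination (1/27 : ℂ) * habc
      exact_mod_cast this
    linarith
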